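/- Let 𝔊 be a finite connected symmetric graph without loops and without dead ends, with edge Laplacian Δ_𝔈 f(e) = Σ_{e': ι(e')=τ(e), τ(e')≠ι(e)} f(e') acting on functions on directed edges. Then the dimension of the eigenspace {Δ_𝔈 = 1} equals the cyclomatic number c(𝔊) if c(𝔊) ≠ 1, and equals c(𝔊) + 1 = 2 if c(𝔊) = 1. -/

import Mathlib

set_option linter.unusedSectionVars false
set_option synthInstance.maxHeartbeats 1000000
set_option maxHeartbeats 1000000

/-- The set of directed edges of a graph: ordered pairs of adjacent vertices. -/
abbrev DirEdge {V : Type*} (G : SimpleGraph V) := {p : V × V // G.Adj p.1 p.2}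

/-- The edge Laplacian `Δ_𝔈 f (e) = Σ_{e' : ι(e') = τ(e), τ(e') ≠ ι(e)} f e'`,
summing `f` over the directed edges `e'` continuing `e` without backtracking. -/
noncomputable def edgeLaplacian {V : Type*} [Fintype V] [DecidableEq V]
    (G : SimpleGraph V) [DecidableRel G.Adj] :
    (DirEdge G → ℂ) →ₗ[ℂ] (DirEdge G → ℂ) where
  toFun f e := ∑ e' ∈ Finset.univ.filter
    (fun e' : DirEdge G => e'.1.1 = e.1.2 ∧ e'.1.2 ≠ e.1.1), f e'
  map_add' f g := by funext e; simp [Finset.sum_add_distrib]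
  map_smul' c f := by funext e; simp [Finset.mul_sum]

namespace EdgeLapAux
variable {V : Type*} [Fintype V] [DecidableEq V] (G : SimpleGraph V) [DecidableRel G.Adj]
def rev (e : DirEdge G) : DirEdge G := ⟨(e.1.2, e.1.1), e.2.symm⟩
@[simp] lemma rev_rev (e : DirEdge G) : rev G (rev G e) = e := rfl
noncomputable def divL : (DirEdge G → ℂ) →ₗ[ℂ] (V → ℂ) where
  toFun f v := ∑ e ∈ Finset.univ.filter (fun e : DirEdge G => e.1.1 = v), f e
  map_add' f g := by funext v; simp [Finset.sum_add_distrib]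
  map_smul' c f := by funext v; simp [Finset.mul_sum]
noncomputable def Asub : Submodule ℂ (DirEdge G → ℂ) where
  carrier := {f | ∀ e, f (rev G e) = - f e}
  add_mem' hf hg e := by simp only [Pi.add_apply, hf e, hg e]; ring
  zero_mem' e := by simp
  smul_mem' c f hf e := by simp [hf e]
noncomputable def dA : (Asub G) →ₗ[ℂ] (V → ℂ) := (divL G).comp (Asub G).subtype

lemma delta_mem_adj {u w : V} (h : G.Adj u w) :
    (Pi.single u (1:ℂ) - Pi.single w 1) ∈ LinearMap.range (dA G) := by
  set h0 : DirEdge G → ℂ :=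
    fun e' => (if e' = (⟨(u,w), h⟩ : DirEdge G) then 1 else 0)
      - (if e' = (⟨(w,u), h.symm⟩ : DirEdge G) then 1 else 0) with hh0
  have hmem : h0 ∈ Asub G := by
    intro e
    simp only [hh0]
    have h1 : (rev G e = ⟨(u,w), h⟩) ↔ (e = ⟨(w,u), h.symm⟩) := by
      constructor
      · intro he; rw [← rev_rev G e, he]; rfl
      · rintro rfl; rfl
    have h2 : (rev G e = ⟨(w,u), h.symm⟩) ↔ (e = ⟨(u,w), h⟩) := by
      constructor
      · intro he; rw [← rev_rev G e, he]; rfl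
      · rintro rfl; rfl
    rw [if_congr h1 rfl rfl, if_congr h2 rfl rfl]; ring
  refine ⟨⟨h0, hmem⟩, ?_⟩
  funext v
  show divL G h0 v = _
  show (∑ e ∈ Finset.univ.filter (fun e : DirEdge G => e.1.1 = v), h0 e) = _
  simp only [hh0, Finset.sum_sub_distrib, Finset.sum_ite_eq' (Finset.univ.filter _)]
  simp only [Finset.mem_filter, Finset.mem_univ, true_and]
  simp [Pi.single_apply, eq_comm]

noncomputable def sumL : (V → ℂ) →ₗ[ℂ] ℂ where
  toFun f := ∑ v, f v
  map_add' f g := by simp [Finset.sum_add_distrib]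
  map_smul' c f := by simp [Finset.mul_sum]
noncomputable def meanZero : Submodule ℂ (V → ℂ) := LinearMap.ker (sumL (V := V))

lemma delta_mem_reach {u w : V} (h : G.Reachable u w) :
    (Pi.single u (1:ℂ) - Pi.single w 1) ∈ LinearMap.range (dA G) := by
  obtain ⟨p⟩ := h
  induction p with
  | nil => simpa using Submodule.zero_mem _
  | @cons u x w ha _ ih =>
      have h1 := delta_mem_adj G ha
      have := Submodule.add_mem _ h1 ih
      simpa using this

lemma range_dA_aux (hconn : G.Connected) : LinearMap.range (dA G) = meanZero (V := V) := by
  have hdelta : ∀ {u w : V}, G.Reachable u w →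
      (Pi.single u (1:ℂ) - Pi.single w 1) ∈ LinearMap.range (dA G) :=
    fun h => delta_mem_reach G h
  apply le_antisymm
  · rintro _ ⟨⟨f, hf⟩, rfl⟩
    show sumL (dA G ⟨f, hf⟩) = 0
    show ∑ v, divL G f v = 0
    have h1 : ∑ v, divL G f v = ∑ e, f e := Finset.sum_fiberwise _ _ _
    have h2 : ∑ e, f (rev G e) = ∑ e, f e :=
      Fintype.sum_equiv (Function.Involutive.toPerm _ (rev_rev G)) _ _ (fun e => rfl)
    have h3 : ∑ e, f (rev G e) = -∑ e, f e := by
      simp only [← Finset.sum_neg_distrib]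
      exact Finset.sum_congr rfl fun e _ => hf e
    rw [h1]
    have := h2.symm.trans h3
    linear_combination this / 2 -- ?
  · intro φ hφ
    obtain ⟨v₀⟩ := hconn.nonempty
    have hrep : φ = ∑ v, φ v • (Pi.single v (1:ℂ) - Pi.single v₀ 1) := by
      funext x
      have hs : (sumL φ : ℂ) = 0 := hφ
      have hsum : ∑ v, φ v = 0 := hs
      simp only [Finset.sum_apply, Pi.smul_apply, Pi.sub_apply, Pi.single_apply,
        smul_eq_mul, mul_sub, Finset.sum_sub_distrib]
      rw [← Finset.sum_mul, hsum, zero_mul, sub_zero]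
      simp [mul_ite, eq_comm]
    rw [hrep]
    exact Submodule.sum_mem _ fun v _ => Submodule.smul_mem _ _ (hdelta (hconn v v₀))

abbrev pord (e : DirEdge G) : Prop :=
  Fintype.equivFin V e.1.1 < Fintype.equivFin V e.1.2

lemma pord_rev {e : DirEdge G} (h : ¬ pord G e) : pord G (rev G e) := by
  have hne : e.1.1 ≠ e.1.2 := e.2.ne
  have : Fintype.equivFin V e.1.1 ≠ Fintype.equivFin V e.1.2 :=
    fun hh => hne ((Fintype.equivFin V).injective hh)
  exact lt_of_le_of_ne (not_lt.mp h) (Ne.symm this)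

lemma not_pord_rev {e : DirEdge G} (h : pord G e) : ¬ pord G (rev G e) :=
  fun hh => absurd h (not_lt.mpr (le_of_lt hh))

noncomputable def asubEquiv : (Asub G) ≃ₗ[ℂ] ({e : DirEdge G // pord G e} → ℂ) where
  toFun f p := f.1 p.1
  map_add' f g := rfl
  map_smul' c f := rfl
  invFun g := ⟨fun e => if h : pord G e then g ⟨e, h⟩ else - g ⟨rev G e, pord_rev G h⟩, by
    intro e
    dsimp only
    by_cases h : pord G e
    · rw [dif_pos h, dif_neg (not_pord_rev G h)]
      simp only [rev_rev]
    · rw [dif_neg h, dif_pos (pord_rev G h), neg_neg]⟩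
  left_inv f := by
    apply Subtype.ext
    funext e
    dsimp only
    by_cases h : pord G e
    · exact dif_pos h
    · rw [dif_neg h]
      show -f.1 (rev G e) = f.1 e
      rw [f.2 e, neg_neg]
  right_inv g := by
    funext p
    dsimp only
    exact dif_pos p.2

lemma two_card_pord :
    2 * Fintype.card {e : DirEdge G // pord G e} = Fintype.card (DirEdge G) := by
  have hcompl := Fintype.card_subtype_compl (fun e : DirEdge G => pord G e)
  have hequiv : {e : DirEdge G // ¬ pord G e} ≃ {e : DirEdge G // pord G e} :=
    { toFun := fun e => ⟨rev G e.1, pord_rev G e.2⟩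
      invFun := fun e => ⟨rev G e.1, not_pord_rev G e.2⟩
      left_inv := fun e => by simp
      right_inv := fun e => by simp }
  have hle : Fintype.card {e : DirEdge G // pord G e} ≤ Fintype.card (DirEdge G) :=
    Fintype.card_subtype_le _
  have := Fintype.card_congr hequiv
  omega

lemma finrank_Asub :
    Module.finrank ℂ (Asub G) = Fintype.card {e : DirEdge G // pord G e} := by
  rw [(asubEquiv G).finrank_eq]
  simp [Module.finrank_pi]

lemma finrank_meanZero [Nonempty V] :
    Module.finrank ℂ (meanZero (V := V)) + 1 = Fintype.card V := by
  have hsur : LinearMap.range (sumL (V := V)) = ⊤ := by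
    rw [LinearMap.range_eq_top]
    intro x
    obtain ⟨v₀⟩ := ‹Nonempty V›
    refine ⟨Pi.single v₀ x, ?_⟩
    show ∑ v, Pi.single v₀ x v = x
    simp [Pi.single_apply]
  have h := LinearMap.finrank_range_add_finrank_ker (sumL (V := V))
  rw [hsur] at h
  simp only [finrank_top, Module.finrank_self] at h
  rw [Module.finrank_pi ℂ] at h  -- finrank (V → ℂ)
  rw [add_comm] at h
  exact h

noncomputable def Zsub : Submodule ℂ (DirEdge G → ℂ) := Asub G ⊓ LinearMap.ker (divL G)

lemma range_dA (hconn : G.Connected) : LinearMap.range (dA G) = meanZero (V := V) :=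
  range_dA_aux G hconn

lemma finrank_Zsub (hconn : G.Connected) (c : ℕ)
    (hc : 2 * c + 2 * Fintype.card V = Fintype.card (DirEdge G) + 2) :
    Module.finrank ℂ (Zsub G) = c := by
  have : Nonempty V := hconn.nonempty
  have hker : LinearMap.ker (dA G) = (Zsub G).comap (Asub G).subtype := by
    ext ⟨f, hf⟩
    simp only [LinearMap.mem_ker, Submodule.mem_comap, Submodule.subtype_apply, Zsub,
      Submodule.mem_inf]
    exact ⟨fun h => ⟨hf, h⟩, fun h => h.2⟩
  have hle : Zsub G ≤ Asub G := inf_le_left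
  have hequiv : Module.finrank ℂ ((Zsub G).comap (Asub G).subtype) = Module.finrank ℂ (Zsub G) :=
    LinearEquiv.finrank_eq (Submodule.comapSubtypeEquivOfLe hle)
  have h1 := LinearMap.finrank_range_add_finrank_ker (dA G)
  rw [range_dA G hconn, hker] at h1
  rw [hequiv] at h1
  rw [finrank_Asub G] at h1
  have h2 := finrank_meanZero (V := V)
  have h3 := two_card_pord G
  omega

lemma lap_apply (f : DirEdge G → ℂ) (e : DirEdge G) :
    edgeLaplacian G f e = divL G f e.1.2 - f (rev G e) := by
  show ∑ e' ∈ Finset.univ.filter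
      (fun e' : DirEdge G => e'.1.1 = e.1.2 ∧ e'.1.2 ≠ e.1.1), f e'
    = (∑ e' ∈ Finset.univ.filter (fun e' : DirEdge G => e'.1.1 = e.1.2), f e') - f (rev G e)
  have hsplit := Finset.sum_filter_add_sum_filter_not
    (Finset.univ.filter (fun e' : DirEdge G => e'.1.1 = e.1.2))
    (fun e' : DirEdge G => e'.1.2 ≠ e.1.1) f
  have h1 : (Finset.univ.filter (fun e' : DirEdge G => e'.1.1 = e.1.2)).filter
      (fun e' : DirEdge G => e'.1.2 ≠ e.1.1)
      = Finset.univ.filter (fun e' : DirEdge G => e'.1.1 = e.1.2 ∧ e'.1.2 ≠ e.1.1) := by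
    rw [Finset.filter_filter]
  have h2 : (Finset.univ.filter (fun e' : DirEdge G => e'.1.1 = e.1.2)).filter
      (fun e' : DirEdge G => ¬ e'.1.2 ≠ e.1.1) = {rev G e} := by
    ext e'
    simp only [Finset.mem_filter, Finset.mem_univ, true_and, Finset.mem_singleton, not_not]
    constructor
    · rintro ⟨ha, hb⟩
      exact Subtype.ext (Prod.ext ha hb)
    · rintro rfl; exact ⟨rfl, rfl⟩
  rw [h1, h2] at hsplit
  simp only [Finset.sum_singleton] at hsplit
  rw [eq_sub_iff_add_eq]
  exact hsplit

noncomputable def Wsub (v₀ : V) : Submodule ℂ (DirEdge G → ℂ) where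
  carrier := {f | (∀ e, f e + f (rev G e) = divL G f v₀) ∧ ∀ v, divL G f v = divL G f v₀}
  add_mem' := by
    rintro f g ⟨hf1, hf2⟩ ⟨hg1, hg2⟩
    constructor
    · intro e; simp only [Pi.add_apply, map_add]; rw [← hf1 e, ← hg1 e]; ring
    · intro v; simp only [map_add, Pi.add_apply, hf2 v, hg2 v]
  zero_mem' := by simp
  smul_mem' := by
    rintro c f ⟨hf1, hf2⟩
    constructor
    · intro e; simp only [Pi.smul_apply, map_smul, smul_eq_mul]
      rw [← hf1 e]; ring
    · intro v; simp only [map_smul, Pi.smul_apply, smul_eq_mul, hf2 v]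

lemma const_of_adj_eq (hconn : G.Connected) (g : V → ℂ)
    (h : ∀ u w, G.Adj u w → g u = g w) (u w : V) : g u = g w := by
  obtain ⟨p⟩ := hconn u w
  induction p with
  | nil => rfl
  | cons a _ ih => exact (h _ _ a).trans ih

lemma eigen_eq_W (hconn : G.Connected) (v₀ : V) :
    Module.End.eigenspace (edgeLaplacian G) (1 : ℂ) = Wsub G v₀ := by
  ext f
  rw [Module.End.mem_eigenspace_iff, one_smul]
  have hiff : edgeLaplacian G f = f ↔ ∀ e, f e + f (rev G e) = divL G f (e.1.2) := by
    rw [funext_iff]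
    apply forall_congr'
    intro e
    rw [lap_apply]
    constructor
    · intro h; rw [← h]; ring
    · intro h; rw [← h]; ring
  rw [hiff]
  constructor
  · intro h
    have hconst : ∀ v, divL G f v = divL G f v₀ := by
      intro v
      apply const_of_adj_eq G hconn
      intro u w hadj
      have h1 := h ⟨(u, w), hadj⟩
      have h2 := h (rev G ⟨(u, w), hadj⟩)
      simp only [rev_rev] at h2
      show divL G f u = divL G f w
      have : (rev G ⟨(u, w), hadj⟩).1.2 = u := rfl
      rw [this] at h2
      rw [← h1, ← h2]; ring
    exact ⟨fun e => (h e).trans (hconst e.1.2), hconst⟩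
  · rintro ⟨h1, h2⟩ e
    rw [h1 e, h2 e.1.2]

noncomputable def piW (v₀ : V) : (Wsub G v₀) →ₗ[ℂ] ℂ :=
  (LinearMap.proj v₀).comp ((divL G).comp (Wsub G v₀).subtype)

lemma piW_apply (v₀ : V) (f : Wsub G v₀) : piW G v₀ f = divL G f.1 v₀ := rfl

lemma Zsub_le_Wsub (v₀ : V) : Zsub G ≤ Wsub G v₀ := by
  rintro f ⟨hA, hK⟩
  have hK' : divL G f = 0 := hK
  constructor
  · intro e
    rw [hA e, hK']
    simp
  · intro v
    rw [hK']
    rfl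

lemma card_out (v : V) :
    (Finset.univ.filter (fun e : DirEdge G => e.1.1 = v)).card = G.degree v := by
  rw [← SimpleGraph.card_neighborFinset_eq_degree]
  apply Finset.card_bij (fun e _ => e.1.2)
  · rintro e he
    simp only [Finset.mem_filter, Finset.mem_univ, true_and] at he
    rw [SimpleGraph.mem_neighborFinset, ← he]; exact e.2
  · rintro e he e' he' h
    simp only [Finset.mem_filter, Finset.mem_univ, true_and] at he he'
    exact Subtype.ext (Prod.ext (he.trans he'.symm) h)
  · rintro w hw
    rw [SimpleGraph.mem_neighborFinset] at hw
    exact ⟨⟨(v, w), hw⟩, by simp, rfl⟩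

lemma sum_divL (f : DirEdge G → ℂ) : ∑ v, divL G f v = ∑ e, f e :=
  Finset.sum_fiberwise _ _ _

lemma sum_rev (f : DirEdge G → ℂ) : ∑ e, f (rev G e) = ∑ e, f e :=
  Fintype.sum_equiv (Function.Involutive.toPerm _ (rev_rev G)) _ _ (fun e => rfl)

lemma sum_degree : ∑ v, G.degree v = Fintype.card (DirEdge G) := by
  have h := Finset.card_eq_sum_card_fiberwise
    (f := fun e : DirEdge G => e.1.1) (s := Finset.univ) (t := Finset.univ)
    (fun _ _ => Finset.mem_univ _)
  rw [Finset.card_univ] at h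
  rw [h]
  exact Finset.sum_congr rfl fun v _ => (card_out G v).symm

lemma ker_piW (v₀ : V) :
    LinearMap.ker (piW G v₀) = (Zsub G).comap (Wsub G v₀).subtype := by
  ext f
  obtain ⟨f, hf1, hf2⟩ := f
  simp only [LinearMap.mem_ker, Submodule.mem_comap, Submodule.subtype_apply]
  rw [piW_apply]
  show divL G f v₀ = 0 ↔ f ∈ Zsub G
  constructor
  · intro h0
    refine Submodule.mem_inf.mpr ⟨fun e => ?_, ?_⟩
    · have := hf1 e
      rw [h0] at this
      linear_combination this
    · show divL G f = 0
      funext v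
      rw [hf2 v, h0]
      rfl
  · intro hZ
    have hK : divL G f = 0 := (Submodule.mem_inf.mp hZ).2
    rw [hK]
    rfl

theorem dim_edge_laplacian_eigenspace_one'
    (hconn : G.Connected)
    (c : ℕ) (hc : 2 * c + 2 * Fintype.card V = Fintype.card (DirEdge G) + 2) :
    Module.finrank ℂ ↥(Module.End.eigenspace (edgeLaplacian G) (1 : ℂ)) =
      if c = 1 then c + 1 else c := by
  have hV : Nonempty V := hconn.nonempty
  obtain ⟨v₀⟩ := hV
  rw [eigen_eq_W G hconn v₀]
  have hrk := LinearMap.finrank_range_add_finrank_ker (piW G v₀)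
  have hkerZ : Module.finrank ℂ (LinearMap.ker (piW G v₀)) = c := by
    rw [ker_piW]
    rw [LinearEquiv.finrank_eq (Submodule.comapSubtypeEquivOfLe (Zsub_le_Wsub G v₀))]
    exact finrank_Zsub G hconn c hc
  rw [hkerZ] at hrk
  by_cases hC : c = 1
  · -- range = ⊤
    subst hC
    have hcard : Fintype.card (DirEdge G) = 2 * Fintype.card V := by omega
    set φ : V → ℂ := fun v => 1 - (G.degree v : ℂ) / 2 with hφ
    have hmz : φ ∈ meanZero (V := V) := by
      show sumL φ = 0
      show ∑ v, (1 - (G.degree v : ℂ) / 2) = 0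
      rw [Finset.sum_sub_distrib]
      rw [← Finset.sum_div]
      have : ∑ v, (G.degree v : ℂ) = (Fintype.card (DirEdge G) : ℂ) := by
        exact_mod_cast sum_degree G
      rw [this, hcard]
      push_cast
      simp [Finset.sum_const, Finset.card_univ]
    rw [← range_dA G hconn] at hmz
    obtain ⟨⟨h, hA⟩, hdiv⟩ := hmz
    have hdiv' : divL G h = φ := hdiv
    set f : DirEdge G → ℂ := fun e => 1/2 + h e with hf
    have hdivf : ∀ v, divL G f v = 1 := by
      intro v
      have hsplit : divL G f v = divL G (fun _ => (1:ℂ)/2) v + divL G h v := by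
        have hfd : f = (fun _ => (1:ℂ)/2) + h := rfl
        rw [hfd, map_add]
        rfl
      have hconst : divL G (fun _ => (1:ℂ)/2) v = (G.degree v : ℂ) / 2 := by
        show ∑ e ∈ Finset.univ.filter (fun e : DirEdge G => e.1.1 = v), (1:ℂ)/2 = _
        rw [Finset.sum_const, card_out G v]
        simp [nsmul_eq_mul]
        ring
      rw [hsplit, hconst, hdiv', hφ]
      ring
    have hfW : f ∈ Wsub G v₀ := by
      constructor
      · intro e
        show (1/2 + h e) + (1/2 + h (rev G e)) = divL G f v₀
        rw [hA e, hdivf v₀]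
        ring
      · intro v; rw [hdivf v, hdivf v₀]
    have hsur : LinearMap.range (piW G v₀) = ⊤ := by
      rw [LinearMap.range_eq_top]
      intro x
      refine ⟨x • ⟨f, hfW⟩, ?_⟩
      rw [map_smul, piW_apply]
      show x • divL G f v₀ = x
      rw [hdivf v₀]
      simp
    rw [hsur, finrank_top, Module.finrank_self] at hrk
    rw [if_pos rfl]
    omega
  · -- range = ⊥
    have hzero : piW G v₀ = 0 := by
      ext ⟨f, hf1, hf2⟩
      rw [piW_apply]
      show divL G f v₀ = 0
      set s := divL G f v₀ with hs
      by_contra hsne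
      have h1 : ∑ v, divL G f v = ∑ e, f e := sum_divL G f
      have h2 : ∑ v, divL G f v = (Fintype.card V : ℂ) * s := by
        rw [Finset.sum_congr rfl fun v _ => hf2 v]
        simp [Finset.sum_const, Finset.card_univ, nsmul_eq_mul]
      have h3 : ∑ e, (f e + f (rev G e)) = (Fintype.card (DirEdge G) : ℂ) * s := by
        rw [Finset.sum_congr rfl fun e _ => hf1 e]
        simp [Finset.sum_const, Finset.card_univ, nsmul_eq_mul]
      have h4 : ∑ e, (f e + f (rev G e)) = 2 * ∑ e, f e := by
        rw [Finset.sum_add_distrib, sum_rev]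
        ring
      have h5 : (Fintype.card (DirEdge G) : ℂ) * s = 2 * ((Fintype.card V : ℂ) * s) := by
        rw [← h3, h4, ← h1, h2]
      have h6 : (Fintype.card (DirEdge G) : ℂ) = 2 * (Fintype.card V : ℂ) :=
        mul_right_cancel₀ hsne (by linear_combination h5)
      have h7 : Fintype.card (DirEdge G) = 2 * Fintype.card V := by
        exact_mod_cast h6
      omega
    have hbot : LinearMap.range (piW G v₀) = ⊥ := by
      rw [LinearMap.range_eq_bot]
      exact hzero
    rw [hbot, finrank_bot] at hrk
    simp only [if_neg hC]
    omega

end EdgeLapAux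

open EdgeLapAux in
/-- **Eigenvalue `1` of the edge Laplacian and the cyclomatic number.** -/
theorem dim_edge_laplacian_eigenspace_one
    {V : Type*} [Fintype V] [DecidableEq V]
    (G : SimpleGraph V) [DecidableRel G.Adj]
    (hconn : G.Connected)
    (hdeg : ∀ x : V, 1 < G.degree x)
    (c : ℕ) (hc : 2 * c + 2 * Fintype.card V = Fintype.card (DirEdge G) + 2) :
    Module.finrank ℂ ↥(Module.End.eigenspace (edgeLaplacian G) (1 : ℂ)) =
      if c = 1 then c + 1 else c :=
  dim_edge_laplacian_eigenspace_one' G hconn c hc
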